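/- Let |ψ_k⟩ = cos(θ/2)|0⟩ + e^{iφ_k} sin(θ/2)|1⟩ for k=1,2,3 with φ_1=0, the phases φ_1, φ_2, φ_3 pairwise distinct, and 0 < θ < π. If a 2×2 matrix K satisfies that K ρ K†/tr(KρK†) is a convex combination of the projectors |ψ_k⟩⟨ψ_k| for every state ρ that is a convex combination of these projectors (with KρK† ≠ 0), then Δ := K̄_{11}K_{12} tan²(θ/2) − K̄_{21}K_{22} = 0, and consequently |K_{11}|² − |K_{22}|² + |K_{12}|² (K̄_{21}K_{22})/(K̄_{11}K_{12}) − |K_{21}|² (K̄_{11}K_{12})/(K̄_{21}K_{22}) = 0 whenever the quotients are defined. -/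

import Mathlib

open Complex Matrix

def proj2 (v : Fin 2 → ℂ) : Matrix (Fin 2) (Fin 2) ℂ :=
  Matrix.of fun i j => v i * star (v j)

noncomputable def ψvec (θ φ : ℝ) : Fin 2 → ℂ :=
  ![(Real.cos (θ/2) : ℂ), Complex.exp (φ * Complex.I) * (Real.sin (θ/2) : ℂ)]

lemma expconj (φ : ℝ) : Complex.exp (φ * Complex.I) * (starRingEnd ℂ) (Complex.exp (φ * Complex.I)) = 1 := by
  rw [← Complex.exp_conj, ← Complex.exp_add]; simp [Complex.conj_I]

lemma KPK (K : Matrix (Fin 2) (Fin 2) ℂ) (v : Fin 2 → ℂ) (i j : Fin 2) :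
    (K * proj2 v * Kᴴ) i j = (K i 0 * v 0 + K i 1 * v 1) * star (K j 0 * v 0 + K j 1 * v 1) := by
  simp [Matrix.mul_apply, proj2, Matrix.conjTranspose_apply, Fin.sum_univ_two, star_add,
    StarMul.star_mul]
  ring

lemma sigma00 (θ φ₂ φ₃ q₁ q₂ : ℝ) :
    ((q₁ • proj2 (ψvec θ 0) + q₂ • proj2 (ψvec θ φ₂) + (1 - q₁ - q₂) • proj2 (ψvec θ φ₃)) : Matrix (Fin 2) (Fin 2) ℂ) 0 0
    = ((Real.cos (θ/2) : ℂ))^2 := by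
  simp [proj2, ψvec, Matrix.add_apply, Matrix.smul_apply, Complex.real_smul, Complex.conj_ofReal,
    -Complex.ofReal_cos, Complex.ofReal_sub, Complex.ofReal_one]
  ring

lemma sigma11 (θ φ₂ φ₃ q₁ q₂ : ℝ) :
    ((q₁ • proj2 (ψvec θ 0) + q₂ • proj2 (ψvec θ φ₂) + (1 - q₁ - q₂) • proj2 (ψvec θ φ₃)) : Matrix (Fin 2) (Fin 2) ℂ) 1 1
    = ((Real.sin (θ/2) : ℂ))^2 := by
  have h2 := expconj φ₂
  have h3 := expconj φ₃
  simp [proj2, ψvec, Matrix.add_apply, Matrix.smul_apply, Complex.real_smul, Complex.conj_ofReal,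
    -Complex.ofReal_sin, Complex.ofReal_sub, Complex.ofReal_one, StarMul.star_mul,
    Complex.ofReal_zero, Complex.exp_zero]
  linear_combination ((q₂:ℂ) * (Real.sin (θ/2):ℂ)^2) * h2
    + ((1:ℂ)-(q₁:ℂ)-(q₂:ℂ)) * (Real.sin (θ/2):ℂ)^2 * h3

lemma vertex_key (θ φ₂ φ₃ φ : ℝ) (K : Matrix (Fin 2) (Fin 2) ℂ)
    (h : (K * proj2 (ψvec θ φ) * Kᴴ).trace ≠ 0 →
      ∃ q₁ q₂ : ℝ, 0 ≤ q₁ ∧ 0 ≤ q₂ ∧ q₁ + q₂ ≤ 1 ∧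
        K * proj2 (ψvec θ φ) * Kᴴ = (K * proj2 (ψvec θ φ) * Kᴴ).trace •
          (q₁ • proj2 (ψvec θ 0) + q₂ • proj2 (ψvec θ φ₂)
            + (1 - q₁ - q₂) • proj2 (ψvec θ φ₃))) :
    ((Real.sin (θ/2) : ℂ))^2 * ((K * proj2 (ψvec θ φ) * Kᴴ) 0 0)
      = ((Real.cos (θ/2) : ℂ))^2 * ((K * proj2 (ψvec θ φ) * Kᴴ) 1 1) := by
  set M := K * proj2 (ψvec θ φ) * Kᴴ with hM
  by_cases htr : M.trace = 0
  · have h00 : M 0 0 = ((Complex.normSq (K 0 0 * ψvec θ φ 0 + K 0 1 * ψvec θ φ 1) : ℝ) : ℂ) := by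
      rw [hM, KPK, Complex.star_def, Complex.mul_conj]
    have h11 : M 1 1 = ((Complex.normSq (K 1 0 * ψvec θ φ 0 + K 1 1 * ψvec θ φ 1) : ℝ) : ℂ) := by
      rw [hM, KPK, Complex.star_def, Complex.mul_conj]
    rw [Matrix.trace_fin_two, h00, h11] at htr
    rw [← Complex.ofReal_add, Complex.ofReal_eq_zero] at htr
    have h1 := Complex.normSq_nonneg (K 0 0 * ψvec θ φ 0 + K 0 1 * ψvec θ φ 1)
    have h2 := Complex.normSq_nonneg (K 1 0 * ψvec θ φ 0 + K 1 1 * ψvec θ φ 1)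
    have e1 : Complex.normSq (K 0 0 * ψvec θ φ 0 + K 0 1 * ψvec θ φ 1) = 0 := by linarith
    have e2 : Complex.normSq (K 1 0 * ψvec θ φ 0 + K 1 1 * ψvec θ φ 1) = 0 := by linarith
    rw [h00, h11, e1, e2]; simp
  · obtain ⟨q₁, q₂, _, _, _, hmat⟩ := h htr
    have h00 : M 0 0 = M.trace * ((Real.cos (θ/2) : ℂ))^2 := by
      conv_lhs => rw [hmat]
      rw [Matrix.smul_apply, sigma00, smul_eq_mul]
    have h11 : M 1 1 = M.trace * ((Real.sin (θ/2) : ℂ))^2 := by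
      conv_lhs => rw [hmat]
      rw [Matrix.smul_apply, sigma11, smul_eq_mul]
    rw [h00, h11]; ring

theorem stmt3 (θ φ₂ φ₃ : ℝ) (hθ : 0 < θ ∧ θ < Real.pi)
    (hφdist : Complex.exp (φ₂ * Complex.I) ≠ 1 ∧ Complex.exp (φ₃ * Complex.I) ≠ 1 ∧
      Complex.exp (φ₂ * Complex.I) ≠ Complex.exp (φ₃ * Complex.I))
    (K : Matrix (Fin 2) (Fin 2) ℂ)
    (hfree : ∀ p₁ p₂ : ℝ, 0 ≤ p₁ → 0 ≤ p₂ → p₁ + p₂ ≤ 1 →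
      let ρ : Matrix (Fin 2) (Fin 2) ℂ :=
        p₁ • proj2 (ψvec θ 0) + p₂ • proj2 (ψvec θ φ₂) + (1 - p₁ - p₂) • proj2 (ψvec θ φ₃)
      (K * ρ * Kᴴ).trace ≠ 0 →
        ∃ q₁ q₂ : ℝ, 0 ≤ q₁ ∧ 0 ≤ q₂ ∧ q₁ + q₂ ≤ 1 ∧
          K * ρ * Kᴴ = (K * ρ * Kᴴ).trace •
            (q₁ • proj2 (ψvec θ 0) + q₂ • proj2 (ψvec θ φ₂)
              + (1 - q₁ - q₂) • proj2 (ψvec θ φ₃))) :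
    star (K 0 0) * K 0 1 * ((Real.tan (θ/2) : ℂ))^2 - star (K 1 0) * K 1 1 = 0 ∧
      (star (K 0 0) * K 0 1 ≠ 0 → star (K 1 0) * K 1 1 ≠ 0 →
        ((‖K 0 0‖ : ℂ))^2 - ((‖K 1 1‖ : ℂ))^2
          + ((‖K 0 1‖ : ℂ))^2 * (star (K 1 0) * K 1 1) / (star (K 0 0) * K 0 1)
          - ((‖K 1 0‖ : ℂ))^2 * (star (K 0 0) * K 0 1) / (star (K 1 0) * K 1 1) = 0) := by
  obtain ⟨hθ0, hθπ⟩ := hθ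
  obtain ⟨hd2, hd3, hd23⟩ := hφdist
  have hpi := Real.pi_pos
  have hcpos : 0 < Real.cos (θ/2) := Real.cos_pos_of_mem_Ioo ⟨by linarith, by linarith⟩
  have hspos : 0 < Real.sin (θ/2) := Real.sin_pos_of_pos_of_lt_pi (by linarith) (by linarith)
  have hc0 : ((Real.cos (θ/2) : ℝ) : ℂ) ≠ 0 := Complex.ofReal_ne_zero.mpr (ne_of_gt hcpos)
  have hs0 : ((Real.sin (θ/2) : ℝ) : ℂ) ≠ 0 := Complex.ofReal_ne_zero.mpr (ne_of_gt hspos)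
  have H1 := hfree 1 0 zero_le_one le_rfl (by norm_num)
  have H2 := hfree 0 1 le_rfl zero_le_one (by norm_num)
  have H3 := hfree 0 0 le_rfl le_rfl (by norm_num)
  simp only [one_smul, zero_smul, add_zero, zero_add, sub_zero, sub_self] at H1 H2 H3
  have E1 := vertex_key θ φ₂ φ₃ 0 K H1
  have E2 := vertex_key θ φ₂ φ₃ φ₂ K H2
  have E3 := vertex_key θ φ₂ φ₃ φ₃ K H3
  rw [KPK, KPK] at E1 E2 E3
  simp only [ψvec, Matrix.cons_val_zero, Matrix.cons_val_one, Matrix.head_cons,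
    Complex.ofReal_zero, zero_mul, Complex.exp_zero, one_mul, star_add, star_mul',
    Complex.star_def, Complex.conj_ofReal] at E1 E2 E3
  have hz2 := expconj φ₂
  have hz3 := expconj φ₃
  have e2 : (Real.cos (θ/2) : ℂ) * (Real.sin (θ/2) : ℂ) * ((Complex.exp ((φ₂:ℂ) * Complex.I) - 1) * ((Real.sin (θ/2) : ℂ)^2 * (starRingEnd ℂ) (K 0 0) * K 0 1 - (Real.cos (θ/2) : ℂ)^2 * (starRingEnd ℂ) (K 1 0) * K 1 1) + ((starRingEnd ℂ) (Complex.exp ((φ₂:ℂ) * Complex.I)) - 1) * ((Real.sin (θ/2) : ℂ)^2 * K 0 0 * (starRingEnd ℂ) (K 0 1) - (Real.cos (θ/2) : ℂ)^2 * K 1 0 * (starRingEnd ℂ) (K 1 1))) = 0 := by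
    linear_combination E2 - E1 - ((Real.sin (θ/2) : ℂ)^4 * K 0 1 * (starRingEnd ℂ) (K 0 1) - (Real.cos (θ/2) : ℂ)^2 * (Real.sin (θ/2) : ℂ)^2 * K 1 1 * (starRingEnd ℂ) (K 1 1)) * hz2
  have e3 : (Real.cos (θ/2) : ℂ) * (Real.sin (θ/2) : ℂ) * ((Complex.exp ((φ₃:ℂ) * Complex.I) - 1) * ((Real.sin (θ/2) : ℂ)^2 * (starRingEnd ℂ) (K 0 0) * K 0 1 - (Real.cos (θ/2) : ℂ)^2 * (starRingEnd ℂ) (K 1 0) * K 1 1) + ((starRingEnd ℂ) (Complex.exp ((φ₃:ℂ) * Complex.I)) - 1) * ((Real.sin (θ/2) : ℂ)^2 * K 0 0 * (starRingEnd ℂ) (K 0 1) - (Real.cos (θ/2) : ℂ)^2 * K 1 0 * (starRingEnd ℂ) (K 1 1))) = 0 := by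
    linear_combination E3 - E1 - ((Real.sin (θ/2) : ℂ)^4 * K 0 1 * (starRingEnd ℂ) (K 0 1) - (Real.cos (θ/2) : ℂ)^2 * (Real.sin (θ/2) : ℂ)^2 * K 1 1 * (starRingEnd ℂ) (K 1 1)) * hz3
  have hW : ((Real.sin (θ/2) : ℂ)^2 * (starRingEnd ℂ) (K 0 0) * K 0 1 - (Real.cos (θ/2) : ℂ)^2 * (starRingEnd ℂ) (K 1 0) * K 1 1) = 0 := by
    by_contra hW0
    have hsW0 : ((Real.sin (θ/2) : ℂ)^2 * K 0 0 * (starRingEnd ℂ) (K 0 1) - (Real.cos (θ/2) : ℂ)^2 * K 1 0 * (starRingEnd ℂ) (K 1 1)) ≠ 0 := by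
      intro h0
      apply hW0
      have hc := congrArg (starRingEnd ℂ) h0
      simp only [map_sub, _root_.map_mul, map_pow, Complex.conj_ofReal, Complex.conj_conj,
        map_zero] at hc
      linear_combination hc
    have h21 : Complex.exp ((φ₂:ℂ) * Complex.I) - 1 ≠ 0 := sub_ne_zero.mpr hd2
    have h31 : Complex.exp ((φ₃:ℂ) * Complex.I) - 1 ≠ 0 := sub_ne_zero.mpr hd3
    have h32 : Complex.exp ((φ₃:ℂ) * Complex.I) - Complex.exp ((φ₂:ℂ) * Complex.I) ≠ 0 := sub_ne_zero.mpr (Ne.symm hd23)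
    have key : (Real.cos (θ/2) : ℂ) * (Real.sin (θ/2) : ℂ) * (((Real.sin (θ/2) : ℂ)^2 * (starRingEnd ℂ) (K 0 0) * K 0 1 - (Real.cos (θ/2) : ℂ)^2 * (starRingEnd ℂ) (K 1 0) * K 1 1) * ((Real.sin (θ/2) : ℂ)^2 * K 0 0 * (starRingEnd ℂ) (K 0 1) - (Real.cos (θ/2) : ℂ)^2 * K 1 0 * (starRingEnd ℂ) (K 1 1)) * ((Complex.exp ((φ₂:ℂ) * Complex.I) - 1) * (Complex.exp ((φ₃:ℂ) * Complex.I) - 1) * (Complex.exp ((φ₃:ℂ) * Complex.I) - Complex.exp ((φ₂:ℂ) * Complex.I)))) = 0 := by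
      linear_combination (Complex.exp ((φ₂:ℂ) * Complex.I) * Complex.exp ((φ₃:ℂ) * Complex.I) * ((starRingEnd ℂ) (Complex.exp ((φ₃:ℂ) * Complex.I)) - 1) * ((Real.sin (θ/2) : ℂ)^2 * K 0 0 * (starRingEnd ℂ) (K 0 1) - (Real.cos (θ/2) : ℂ)^2 * K 1 0 * (starRingEnd ℂ) (K 1 1))) * e2 - (Complex.exp ((φ₂:ℂ) * Complex.I) * Complex.exp ((φ₃:ℂ) * Complex.I) * ((starRingEnd ℂ) (Complex.exp ((φ₂:ℂ) * Complex.I)) - 1) * ((Real.sin (θ/2) : ℂ)^2 * K 0 0 * (starRingEnd ℂ) (K 0 1) - (Real.cos (θ/2) : ℂ)^2 * K 1 0 * (starRingEnd ℂ) (K 1 1))) * e3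
        + ((Real.cos (θ/2) : ℂ) * (Real.sin (θ/2) : ℂ) * ((Real.sin (θ/2) : ℂ)^2 * (starRingEnd ℂ) (K 0 0) * K 0 1 - (Real.cos (θ/2) : ℂ)^2 * (starRingEnd ℂ) (K 1 0) * K 1 1) * ((Real.sin (θ/2) : ℂ)^2 * K 0 0 * (starRingEnd ℂ) (K 0 1) - (Real.cos (θ/2) : ℂ)^2 * K 1 0 * (starRingEnd ℂ) (K 1 1)) * Complex.exp ((φ₃:ℂ) * Complex.I) * (Complex.exp ((φ₃:ℂ) * Complex.I) - 1)) * hz2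
        - ((Real.cos (θ/2) : ℂ) * (Real.sin (θ/2) : ℂ) * ((Real.sin (θ/2) : ℂ)^2 * (starRingEnd ℂ) (K 0 0) * K 0 1 - (Real.cos (θ/2) : ℂ)^2 * (starRingEnd ℂ) (K 1 0) * K 1 1) * ((Real.sin (θ/2) : ℂ)^2 * K 0 0 * (starRingEnd ℂ) (K 0 1) - (Real.cos (θ/2) : ℂ)^2 * K 1 0 * (starRingEnd ℂ) (K 1 1)) * Complex.exp ((φ₂:ℂ) * Complex.I) * (Complex.exp ((φ₂:ℂ) * Complex.I) - 1)) * hz3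
    exact (mul_ne_zero (mul_ne_zero hc0 hs0) (mul_ne_zero (mul_ne_zero hW0 hsW0)
      (mul_ne_zero (mul_ne_zero h21 h31) h32))) key
  have hsW : ((Real.sin (θ/2) : ℂ)^2 * K 0 0 * (starRingEnd ℂ) (K 0 1) - (Real.cos (θ/2) : ℂ)^2 * K 1 0 * (starRingEnd ℂ) (K 1 1)) = 0 := by
    have hc := congrArg (starRingEnd ℂ) hW
    simp only [map_sub, _root_.map_mul, map_pow, Complex.conj_ofReal, Complex.conj_conj,
      map_zero] at hc
    linear_combination hc
  have hA : (Real.sin (θ/2) : ℂ)^2 * (Real.cos (θ/2) : ℂ)^2 * (K 0 0 * (starRingEnd ℂ) (K 0 0)) + (Real.sin (θ/2) : ℂ)^4 * (K 0 1 * (starRingEnd ℂ) (K 0 1)) - (Real.cos (θ/2) : ℂ)^4 * (K 1 0 * (starRingEnd ℂ) (K 1 0))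
      - (Real.cos (θ/2) : ℂ)^2 * (Real.sin (θ/2) : ℂ)^2 * (K 1 1 * (starRingEnd ℂ) (K 1 1)) = 0 := by
    linear_combination E1 - ((Real.cos (θ/2) : ℂ) * (Real.sin (θ/2) : ℂ)) * hW - ((Real.cos (θ/2) : ℂ) * (Real.sin (θ/2) : ℂ)) * hsW
  simp only [Complex.star_def]
  constructor
  · have htan : (Real.tan (θ/2) : ℂ) = (Real.sin (θ/2) : ℂ) / (Real.cos (θ/2) : ℂ) := by
      rw [Real.tan_eq_sin_div_cos]; push_cast; ring
    rw [htan, div_pow, sub_eq_zero, ← mul_div_assoc, div_eq_iff (pow_ne_zero 2 hc0)]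
    linear_combination hW
  · intro hab hde
    have na : ∀ z : ℂ, ((‖z‖ : ℝ) : ℂ)^2 = z * (starRingEnd ℂ) z := by
      intro z
      rw [← Complex.ofReal_pow, ← Complex.normSq_eq_norm_sq, ← Complex.mul_conj]
    rw [na, na, na, na]
    have hX : (K 0 0 * (starRingEnd ℂ) (K 0 0) - K 1 1 * (starRingEnd ℂ) (K 1 1)) * (((starRingEnd ℂ) (K 0 0) * K 0 1) * ((starRingEnd ℂ) (K 1 0) * K 1 1))
        + (K 0 1 * (starRingEnd ℂ) (K 0 1)) * ((starRingEnd ℂ) (K 1 0) * K 1 1)^2 - (K 1 0 * (starRingEnd ℂ) (K 1 0)) * ((starRingEnd ℂ) (K 0 0) * K 0 1)^2 = 0 := by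
      have hG : (Real.cos (θ/2) : ℂ)^2 * (Real.sin (θ/2) : ℂ)^2 * ((K 0 0 * (starRingEnd ℂ) (K 0 0) - K 1 1 * (starRingEnd ℂ) (K 1 1)) * (((starRingEnd ℂ) (K 0 0) * K 0 1) * ((starRingEnd ℂ) (K 1 0) * K 1 1))
          + (K 0 1 * (starRingEnd ℂ) (K 0 1)) * ((starRingEnd ℂ) (K 1 0) * K 1 1)^2 - (K 1 0 * (starRingEnd ℂ) (K 1 0)) * ((starRingEnd ℂ) (K 0 0) * K 0 1)^2) = 0 := by
        linear_combination (((starRingEnd ℂ) (K 0 0) * K 0 1) * ((starRingEnd ℂ) (K 1 0) * K 1 1)) * hA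
          + (-((Real.sin (θ/2) : ℂ)^2 * ((starRingEnd ℂ) (K 1 0) * K 1 1) * (K 0 1 * (starRingEnd ℂ) (K 0 1))) - (Real.cos (θ/2) : ℂ)^2 * ((starRingEnd ℂ) (K 0 0) * K 0 1) * (K 1 0 * (starRingEnd ℂ) (K 1 0))) * hW
      rcases mul_eq_zero.mp hG with h | h
      · exact absurd h (mul_ne_zero (pow_ne_zero 2 hc0) (pow_ne_zero 2 hs0))
      · exact h
    have hiA : ((starRingEnd ℂ) (K 0 0) * K 0 1) * ((starRingEnd ℂ) (K 0 0) * K 0 1)⁻¹ = 1 := mul_inv_cancel₀ hab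
    have hiD : ((starRingEnd ℂ) (K 1 0) * K 1 1) * ((starRingEnd ℂ) (K 1 0) * K 1 1)⁻¹ = 1 := mul_inv_cancel₀ hde
    apply (mul_left_inj' (mul_ne_zero hab hde)).mp
    rw [zero_mul]
    linear_combination hX + (K 0 1 * (starRingEnd ℂ) (K 0 1)) * ((starRingEnd ℂ) (K 1 0) * K 1 1)^2 * hiA - (K 1 0 * (starRingEnd ℂ) (K 1 0)) * ((starRingEnd ℂ) (K 0 0) * K 0 1)^2 * hiD
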